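/- For every d ≥ 2, the Waring rank of the binary form f(x,y) = x·y^{d−1} is exactly d. -/

import Mathlib

open MvPolynomial

noncomputable section WaringAux

abbrev PB := MvPolynomial (Fin 2) ℂ

private lemma pderiv_pderiv_comm (i j : Fin 2) (p : PB) :
    pderiv i (pderiv j p) = pderiv j (pderiv i p) := by
  induction p using MvPolynomial.induction_on' with
  | monomial s a =>
    rcases eq_or_ne i j with rfl | hij
    · rfl
    · simp only [pderiv_monomial]
      rw [tsub_right_comm]
      congr 1
      rw [Finsupp.tsub_apply, Finsupp.tsub_apply, Finsupp.single_eq_of_ne' hij,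
        Finsupp.single_eq_of_ne' (Ne.symm hij), Nat.sub_zero, Nat.sub_zero]
      ring
  | add p q hp hq => simp [hp, hq]

private def Dlin (p : ℂ × ℂ) : Module.End ℂ PB :=
  p.2 • ((pderiv 0 : Derivation ℂ PB PB) : PB →ₗ[ℂ] PB)
    - p.1 • ((pderiv 1 : Derivation ℂ PB PB) : PB →ₗ[ℂ] PB)

private lemma Dlin_apply (a b : ℂ) (q : PB) :
    Dlin (a, b) q = C b * pderiv 0 q - C a * pderiv 1 q := by
  simp [Dlin, smul_eq_C_mul]

private lemma Dlin_comm (p q : ℂ × ℂ) : Commute (Dlin p) (Dlin q) := by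
  obtain ⟨a, b⟩ := p; obtain ⟨c, e⟩ := q
  refine LinearMap.ext fun r => ?_
  simp only [Module.End.mul_apply, Dlin_apply, map_sub, pderiv_C_mul]
  rw [pderiv_pderiv_comm 0 1, pderiv_pderiv_comm 1 0]
  ring

private def opProd (l : List (ℂ × ℂ)) : Module.End ℂ PB := (l.map Dlin).prod

private lemma opProd_cons (h : ℂ × ℂ) (t : List (ℂ × ℂ)) (q : PB) :
    opProd (h :: t) q = opProd t (Dlin h q) := by
  have hc : Commute (Dlin h) (opProd t) :=
    Commute.list_prod_right _ _ (by
      intro x hx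
      obtain ⟨p, _, rfl⟩ := List.mem_map.1 hx
      exact Dlin_comm _ _)
  show ((Dlin h) * opProd t) q = _
  rw [hc.eq]; rfl

private lemma opProd_kill (l : List (ℂ × ℂ)) (e : ℂ × ℂ) (he : e ∈ l) (q : PB)
    (hq : Dlin e q = 0) : opProd l q = 0 := by
  induction l generalizing q with
  | nil => simp at he
  | cons h t ih =>
    rw [opProd_cons]
    rcases List.mem_cons.1 he with rfl | he'
    · rw [hq, map_zero]
    · refine ih he' _ ?_
      have h2 := congrArg (Dlin h) hq
      rw [map_zero] at h2
      calc Dlin e (Dlin h q) = Dlin h (Dlin e q) := by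
            rw [← Module.End.mul_apply, ← Module.End.mul_apply, (Dlin_comm e h).eq]
        _ = 0 := h2

private lemma key_ne (u v : ℂ) (n : ℕ) (hu : u ≠ 0) :
    (C u * X 0 * X 1 ^ n + C v * X 1 ^ (n+1) : PB) ≠ 0 := by
  intro h
  have hm : Finsupp.single (1 : Fin 2) n + Finsupp.single (1 : Fin 2) 1
      ≠ Finsupp.single (0 : Fin 2) 1 + Finsupp.single (1 : Fin 2) n := by
    intro he
    simpa using DFunLike.congr_fun he 0
  have hco := congrArg (coeff (Finsupp.single 0 1 + Finsupp.single 1 n)) h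
  rw [show (X 0 : PB) = X 0 ^ 1 from (pow_one _).symm] at hco
  simp [X_pow_eq_monomial, monomial_mul, C_mul_monomial, coeff_monomial, hm] at hco
  exact hu hco

private lemma hstep (a b u v : ℂ) (m : ℕ) :
    (C b * pderiv 0 (C u * X 0 * X 1 ^ (m+1) + C v * X 1 ^ (m+1+1))
     - C a * pderiv 1 (C u * X 0 * X 1 ^ (m+1) + C v * X 1 ^ (m+1+1)) : PB)
    = C (-(a*(m+1)*u)) * X 0 * X 1 ^ m + C (b*u - a*(m+2)*v) * X 1 ^ (m+1) := by
  simp [pderiv_mul, pderiv_pow, pderiv_X_of_ne, pderiv_X_self, pderiv_C,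
    map_neg, map_mul, map_add, map_sub, map_one, map_natCast, map_ofNat]
  ring

private lemma core (l : List (ℂ × ℂ)) :
    ∀ (u v : ℂ) (n : ℕ), (∀ p ∈ l, p.1 ≠ 0) → u ≠ 0 → l.length ≤ n →
      opProd l (C u * X 0 * X 1 ^ n + C v * X 1 ^ (n+1)) ≠ 0 := by
  induction l with
  | nil =>
    intro u v n _ hu _
    exact key_ne u v n hu
  | cons h t ih =>
    intro u v n hall hu hlen
    obtain ⟨a, b⟩ := h
    obtain ⟨m, rfl⟩ : ∃ m, n = m + 1 := ⟨n - 1, by simp at hlen; omega⟩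
    rw [opProd_cons, Dlin_apply, hstep]
    refine ih _ _ _ (fun p hp => hall p (List.mem_cons_of_mem _ hp)) ?_ (by simp at hlen ⊢; omega)
    have ha : a ≠ 0 := hall (a, b) List.mem_cons_self
    have hm1 : ((m : ℂ) + 1) ≠ 0 := Nat.cast_add_one_ne_zero m
    exact neg_ne_zero.2 (mul_ne_zero (mul_ne_zero ha hm1) hu)

private lemma Dlin_kill (a b : ℂ) (d : ℕ) :
    Dlin (a, b) ((C a * X 0 + C b * X 1 : PB) ^ d) = 0 := by
  rw [Dlin_apply]
  simp [pderiv_pow, pderiv_C_mul, pderiv_X_self, pderiv_X_of_ne]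
  ring

private lemma homog1 (p : PB) (hp : p.IsHomogeneous 1) :
    p = C (coeff (Finsupp.single 0 1) p) * X 0 + C (coeff (Finsupp.single 1 1) p) * X 1 := by
  classical
  apply MvPolynomial.ext
  intro m
  rw [coeff_add, coeff_C_mul, coeff_C_mul, coeff_X', coeff_X']
  by_cases h0 : Finsupp.single (0 : Fin 2) 1 = m
  · have h1 : Finsupp.single (1 : Fin 2) 1 ≠ m := by
      rw [← h0]; intro he; simpa using DFunLike.congr_fun he 0
    subst h0
    simp [h1]
  · by_cases h1 : Finsupp.single (1 : Fin 2) 1 = m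
    · subst h1
      simp [h0]
    · simp only [if_neg h0, if_neg h1, mul_zero, add_zero]
      refine hp.coeff_eq_zero ?_
      intro hdeg
      have hsum : m 0 + m 1 = 1 := by
        have : m.degree = ∑ i : Fin 2, m i := by
          rw [Finsupp.degree]
          exact Finset.sum_subset (Finset.subset_univ _)
            (fun x _ hx => Finsupp.notMem_support_iff.1 hx)
        rw [this, Fin.sum_univ_two] at hdeg
        exact hdeg
      rcases Nat.eq_zero_or_pos (m 0) with hz | hpos
      · apply h1
        ext i
        fin_cases i <;> simp [Finsupp.single_apply] <;> omega
      · apply h0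
        ext i
        fin_cases i <;> simp [Finsupp.single_apply] <;> omega

end WaringAux

/-- For every `d ≥ 2`, the Waring rank of the binary form `f(x,y) = x·y^{d−1}` is exactly `d`:
`d` is the least `r` for which `f` admits a decomposition `f = Σ_{k=1}^{r} λ_k L_k^d` with
nonzero `λ_k` and linear forms `L_k`. -/
theorem waringRank_x_mul_y_pow (d : ℕ) (hd : 2 ≤ d) :
    IsLeast {r : ℕ | ∃ (lam : Fin r → ℂ) (L : Fin r → MvPolynomial (Fin 2) ℂ),
      (∀ k, lam k ≠ 0) ∧ (∀ k, (L k).IsHomogeneous 1) ∧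
      (X 0 * X 1 ^ (d - 1) : MvPolynomial (Fin 2) ℂ) = ∑ k, C (lam k) * (L k) ^ d} d := by
  classical
  constructor
  · -- membership: roots of unity decomposition
    show ∃ (lam : Fin d → ℂ) (L : Fin d → MvPolynomial (Fin 2) ℂ),
      (∀ k, lam k ≠ 0) ∧ (∀ k, (L k).IsHomogeneous 1) ∧
      (X 0 * X 1 ^ (d - 1) : MvPolynomial (Fin 2) ℂ) = ∑ k, C (lam k) * (L k) ^ d
    have hd0 : (d : ℂ) ≠ 0 := Nat.cast_ne_zero.2 (by omega)
    set ζ : ℂ := Complex.exp (2 * Real.pi * Complex.I / d) with hζdef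
    have hζ : IsPrimitiveRoot ζ d := Complex.isPrimitiveRoot_exp d (by omega)
    have hζ0 : ζ ≠ 0 := hζ.ne_zero (by omega)
    refine ⟨fun j => ζ⁻¹ ^ (j : ℕ) / (d : ℂ) ^ 2, fun j => C (ζ ^ (j : ℕ)) * X 0 + X 1, ?_, ?_, ?_⟩
    · intro j
      exact div_ne_zero (pow_ne_zero _ (inv_ne_zero hζ0)) (pow_ne_zero _ hd0)
    · intro j
      simpa using (isHomogeneous_C_mul_X (ζ ^ (j:ℕ)) (0 : Fin 2)).add (isHomogeneous_X ℂ 1)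
    · -- main identity
      have hsum : ∀ k : ℕ, k ∈ Finset.range (d+1) →
          (∑ j : Fin d, (ζ⁻¹ ^ (j:ℕ) / (d:ℂ)^2) * ζ ^ ((j:ℕ)*k))
            = if k = 1 then 1/(d:ℂ) else 0 := by
        intro k hk
        have hterm : ∀ j : ℕ, (ζ⁻¹ ^ j / (d:ℂ)^2) * ζ ^ (j*k) = (ζ^k * ζ⁻¹)^j / (d:ℂ)^2 := by
          intro j
          rw [mul_pow, ← pow_mul, mul_comm k j]
          ring
        rw [Fin.sum_univ_eq_sum_range (fun j => (ζ⁻¹ ^ j / (d:ℂ)^2) * ζ ^ (j*k))]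
        simp_rw [hterm]
        rw [← Finset.sum_div]
        by_cases hk1 : k = 1
        · subst hk1
          rw [if_pos rfl, pow_one, mul_inv_cancel₀ hζ0]
          simp only [one_pow, Finset.sum_const, Finset.card_range, nsmul_eq_mul, mul_one]
          rw [sq]
          field_simp
        · rw [if_neg hk1]
          have hw1 : ζ^k * ζ⁻¹ ≠ 1 := by
            intro hw
            have hζk : ζ ^ k = ζ := by
              field_simp at hw
              simpa using hw
            rcases lt_or_eq_of_le (Nat.lt_succ_iff.1 (Finset.mem_range.1 hk)) with hlt | heqd
            · exact hk1 (hζ.pow_inj hlt (by omega) (by simpa using hζk))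
            · subst heqd
              rw [hζ.pow_eq_one] at hζk
              exact hζ.ne_one (by omega) hζk.symm
          have hwd : (ζ^k * ζ⁻¹)^d = 1 := by
            rw [mul_pow, ← pow_mul, mul_comm k d, pow_mul, hζ.pow_eq_one, one_pow, inv_pow,
              hζ.pow_eq_one, inv_one, one_mul]
          rw [geom_sum_eq hw1 d, hwd, sub_self, zero_div, zero_div]
      have expand : ∀ j : Fin d, ((C (ζ^(j:ℕ)) * X 0 + X 1 : PB))^d
          = ∑ k ∈ Finset.range (d+1), C (ζ^((j:ℕ)*k)) * (X 0 ^ k * X 1 ^ (d-k) * C ((d.choose k : ℂ))) := by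
        intro j
        rw [add_pow]
        refine Finset.sum_congr rfl fun k hk => ?_
        rw [mul_pow, ← map_pow, ← pow_mul]
        rw [show ((d.choose k : PB)) = C ((d.choose k : ℂ)) by simp [map_natCast]]
        ring
      calc (X 0 * X 1 ^ (d - 1) : PB)
          = ∑ k ∈ Finset.range (d+1), C (if k = 1 then 1/(d:ℂ) else 0)
              * (X 0 ^ k * X 1 ^ (d-k) * C ((d.choose k : ℂ))) := by
            rw [Finset.sum_eq_single_of_mem 1 (Finset.mem_range.2 (by omega))
              (fun k _ hk1 => by rw [if_neg hk1, map_zero, zero_mul])]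
            rw [if_pos rfl, pow_one, Nat.choose_one_right]
            rw [show (C ((d:ℂ)) : PB) = C ((d:ℂ)) from rfl]
            calc (X 0 * X 1 ^ (d - 1) : PB)
                = C ((1/(d:ℂ)) * (d:ℂ)) * (X 0 * X 1 ^ (d-1)) := by
                  rw [one_div, inv_mul_cancel₀ hd0, map_one, one_mul]
              _ = C (1/(d:ℂ)) * (X 0 * X 1 ^ (d-1) * C ((d:ℂ))) := by
                  rw [map_mul]; ring
        _ = ∑ k ∈ Finset.range (d+1), C (∑ j : Fin d, (ζ⁻¹ ^ (j:ℕ) / (d:ℂ)^2) * ζ ^ ((j:ℕ)*k))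
              * (X 0 ^ k * X 1 ^ (d-k) * C ((d.choose k : ℂ))) := by
            refine Finset.sum_congr rfl fun k hk => ?_
            rw [hsum k hk]
        _ = ∑ j : Fin d, C (ζ⁻¹ ^ (j:ℕ) / (d:ℂ)^2) * (C (ζ^(j:ℕ)) * X 0 + X 1)^d := by
            simp_rw [map_sum, Finset.sum_mul]
            rw [Finset.sum_comm]
            refine Finset.sum_congr rfl fun j _ => ?_
            rw [expand j, Finset.mul_sum]
            refine Finset.sum_congr rfl fun k hk => ?_
            rw [map_mul, mul_assoc]

  · -- lower bound
    rintro r ⟨lam, L, hlam, hL, heq⟩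
    by_contra hlt
    push_neg at hlt   -- r < d ... careful: lowerBounds means d ≤ r; we assume ¬ d ≤ r
    -- coefficients
    set A : Fin r → ℂ := fun k => coeff (Finsupp.single 0 1) (L k) with hA
    set B : Fin r → ℂ := fun k => coeff (Finsupp.single 1 1) (L k) with hB
    have hLk : ∀ k, L k = C (A k) * X 0 + C (B k) * X 1 := fun k => homog1 (L k) (hL k)
    set pair : Fin r → ℂ × ℂ := fun k => if A k = 0 then (1, 0) else (A k, B k) with hpair
    set l : List (ℂ × ℂ) := List.ofFn pair with hl
    set S : Finset (Fin r) := Finset.univ.filter (fun k => A k = 0) with hS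
    set μ : ℂ := ∑ k ∈ S, lam k * B k ^ d with hμ
    -- rewrite equation
    have hsplit : (X 0 * X 1 ^ (d - 1) : PB) - C μ * X 1 ^ d
        = ∑ k ∈ Sᶜ, C (lam k) * (L k) ^ d := by
      have : (∑ k ∈ S, C (lam k) * (L k) ^ d : PB) = C μ * X 1 ^ d := by
        rw [hμ, map_sum, Finset.sum_mul]
        refine Finset.sum_congr rfl fun k hk => ?_
        have hk0 : A k = 0 := by simpa [hS] using hk
        rw [hLk k, hk0, map_zero, zero_mul, zero_add, mul_pow, ← map_pow, map_mul, mul_assoc]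
      calc (X 0 * X 1 ^ (d - 1) : PB) - C μ * X 1 ^ d
          = (∑ k, C (lam k) * (L k) ^ d) - ∑ k ∈ S, C (lam k) * (L k) ^ d := by rw [heq, this]
        _ = ∑ k ∈ Sᶜ, C (lam k) * (L k) ^ d := by
            rw [← Finset.sum_add_sum_compl S (fun k => C (lam k) * (L k) ^ d)]
            ring
    -- apply the operator product
    have hkillall : opProd l ((X 0 * X 1 ^ (d - 1) : PB) - C μ * X 1 ^ d) = 0 := by
      rw [hsplit, map_sum]
      refine Finset.sum_eq_zero fun k hk => ?_
      have hk0 : A k ≠ 0 := by simpa [hS] using hk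
      have hmem : pair k ∈ l := by rw [hl]; exact List.mem_ofFn.2 ⟨k, rfl⟩
      have hpk : pair k = (A k, B k) := by rw [hpair]; simp [hk0]
      rw [smul_eq_C_mul (((L k) ^ d : PB)) (lam k) |>.symm, map_smul]
      rw [opProd_kill l (pair k) hmem _ (by rw [hpk, hLk k]; exact Dlin_kill (A k) (B k) d),
        smul_zero]
    -- but core says it is nonzero
    have hform : (X 0 * X 1 ^ (d - 1) : PB) - C μ * X 1 ^ d
        = C 1 * X 0 * X 1 ^ (d-1) + C (-μ) * X 1 ^ ((d-1)+1) := by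
      have : d - 1 + 1 = d := by omega
      rw [this, map_one, one_mul, map_neg, neg_mul, ← sub_eq_add_neg]
    have hne : opProd l ((X 0 * X 1 ^ (d - 1) : PB) - C μ * X 1 ^ d) ≠ 0 := by
      rw [hform]
      refine core l 1 (-μ) (d-1) ?_ one_ne_zero ?_
      · intro p hp
        obtain ⟨k, rfl⟩ := List.mem_ofFn.1 (hl ▸ hp)
        show (if A k = 0 then ((1:ℂ), (0:ℂ)) else (A k, B k)).1 ≠ 0
        rcases eq_or_ne (A k) 0 with h|h
        · rw [if_pos h]; norm_num
        · rw [if_neg h]; exact h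
      · rw [hl, List.length_ofFn]
        omega
    exact hne hkillall
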